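/- Let ψ : (0,∞) → ℝ be concave and nondecreasing, and let c_1, c_2 > 0. Then for all x > 0 the function h(x) = x · ψ( min(c_1 x, c_2) / x ) satisfies h(x) = min( x · ψ(c_1), x · ψ(c_2 / x) ), and consequently h is concave on (0,∞). -/

import Mathlib

/-- If `ψ : (0,∞) → ℝ` is concave and nondecreasing and `c₁, c₂ > 0`, then
`h(x) = x * ψ (min (c₁ x) c₂ / x)` satisfies
`h(x) = min (x * ψ c₁) (x * ψ (c₂ / x))` for every `x > 0`, and consequently `h` is
concave on `(0,∞)`. -/
theorem min_power_rate_concave (ψ : ℝ → ℝ) (c₁ c₂ : ℝ) (hc₁ : 0 < c₁) (hc₂ : 0 < c₂)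
    (hψconc : ConcaveOn ℝ (Set.Ioi (0 : ℝ)) ψ)
    (hψmono : MonotoneOn ψ (Set.Ioi (0 : ℝ))) :
    (∀ x : ℝ, 0 < x →
        x * ψ (min (c₁ * x) c₂ / x) = min (x * ψ c₁) (x * ψ (c₂ / x))) ∧
      ConcaveOn ℝ (Set.Ioi (0 : ℝ)) (fun x : ℝ => x * ψ (min (c₁ * x) c₂ / x)) := by
  have heq : ∀ x : ℝ, 0 < x →
      x * ψ (min (c₁ * x) c₂ / x) = min (x * ψ c₁) (x * ψ (c₂ / x)) := by
    intro x hx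
    have h1 : min (c₁ * x) c₂ / x = min c₁ (c₂ / x) := by
      rw [← min_div_div_right hx.le, mul_div_assoc, div_self hx.ne', mul_one]
    rw [h1]
    rcases le_total c₁ (c₂ / x) with h | h
    · rw [min_eq_left h, min_eq_left (mul_le_mul_of_nonneg_left
        (hψmono (Set.mem_Ioi.2 hc₁) (Set.mem_Ioi.2 (div_pos hc₂ hx)) h) hx.le)]
    · rw [min_eq_right h, min_eq_right (mul_le_mul_of_nonneg_left
        (hψmono (Set.mem_Ioi.2 (div_pos hc₂ hx)) (Set.mem_Ioi.2 hc₁) h) hx.le)]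
  refine ⟨heq, convex_Ioi 0, fun a ha b hb μ ν hμ hν hs => ?_⟩
  have ha' : (0:ℝ) < a := ha
  have hb' : (0:ℝ) < b := hb
  have hz0 : (0:ℝ) < μ • a + ν • b := convex_Ioi 0 ha hb hμ hν hs
  simp only [smul_eq_mul] at hz0 ⊢
  rw [heq a ha', heq b hb', heq _ hz0]
  set z := μ * a + ν * b with hzdef
  have key : μ * (a * ψ (c₂ / a)) + ν * (b * ψ (c₂ / b)) ≤ z * ψ (c₂ / z) := by
    have hsum : μ * a / z + ν * b / z = 1 := by
      field_simp; exact hzdef.symm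
    have hcomb := hψconc.2 (Set.mem_Ioi.2 (div_pos hc₂ ha')) (Set.mem_Ioi.2 (div_pos hc₂ hb'))
      (by positivity) (by positivity) hsum
    simp only [smul_eq_mul] at hcomb
    have h1 : μ * a / z * (c₂ / a) = μ * (c₂ / z) := by
      field_simp
    have h2 : ν * b / z * (c₂ / b) = ν * (c₂ / z) := by
      field_simp
    have harg : μ * a / z * (c₂ / a) + ν * b / z * (c₂ / b) = c₂ / z := by
      rw [h1, h2, ← add_mul, hs, one_mul]
    rw [harg] at hcomb
    have hmul := mul_le_mul_of_nonneg_left hcomb hz0.le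
    calc μ * (a * ψ (c₂ / a)) + ν * (b * ψ (c₂ / b))
        = z * (μ * a / z * ψ (c₂ / a) + ν * b / z * ψ (c₂ / b)) := by
          field_simp
      _ ≤ z * ψ (c₂ / z) := hmul
  have key1 : μ * (a * ψ c₁) + ν * (b * ψ c₁) = z * ψ c₁ := by rw [hzdef]; ring
  apply le_min
  · calc μ * min (a * ψ c₁) (a * ψ (c₂ / a)) + ν * min (b * ψ c₁) (b * ψ (c₂ / b))
        ≤ μ * (a * ψ c₁) + ν * (b * ψ c₁) :=
          add_le_add (mul_le_mul_of_nonneg_left (min_le_left _ _) hμ)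
            (mul_le_mul_of_nonneg_left (min_le_left _ _) hν)
      _ = z * ψ c₁ := key1
  · calc μ * min (a * ψ c₁) (a * ψ (c₂ / a)) + ν * min (b * ψ c₁) (b * ψ (c₂ / b))
        ≤ μ * (a * ψ (c₂ / a)) + ν * (b * ψ (c₂ / b)) :=
          add_le_add (mul_le_mul_of_nonneg_left (min_le_right _ _) hμ)
            (mul_le_mul_of_nonneg_left (min_le_right _ _) hν)
      _ ≤ z * ψ (c₂ / z) := key
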